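/- Let u be a C^{1,2}(F̄_T) solution of the nonlocal system (P) with initial–boundary condition (IB). Assume (A1), (A2), (A3) and that φ₀ is continuous and bounded on F̄ (in particular (A4)). Then sup_{F̄_T} |u(t,x)| ≤ e^{λT} max{ sup_{F̄} |φ₀(x)|, √c₁ }, where λ = c₂ + c₃ L_E² + 1. -/

import Mathlib

open Set MeasureTheory
open scoped RealInnerProductSpace

noncomputable section

section AuxiliaryLemmas

/-- Second derivative test (necessary condition): at an interior local max,
any second derivative is nonpositive. -/
lemma secondDerivTest {φ ψ : ℝ → ℝ} {c : ℝ} (hmax : IsLocalMax φ (0:ℝ))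
    (hd : ∀ᶠ s in nhds (0:ℝ), HasDerivAt φ (ψ s) s) (hd2 : HasDerivAt ψ c 0) : c ≤ 0 := by
  by_contra hc
  push_neg at hc
  have hψ0 : ψ 0 = 0 := by
    have h0 : HasDerivAt φ (ψ 0) 0 := hd.self_of_nhds
    exact hmax.hasDerivAt_eq_zero h0
  -- slope of ψ tends to c > 0, so ψ > 0 on (0, ε)
  have hslope : Filter.Tendsto (fun s => ψ s / s) (nhdsWithin 0 (Ioi 0)) (nhds c) := by
    have := hd2.hasDerivWithinAt (s := Ioi 0)
    rw [hasDerivWithinAt_iff_tendsto_slope] at this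
    have h1 : Ioi (0:ℝ) \ {0} = Ioi 0 := by
      ext z; simp (config := {contextual := true}) [ne_of_gt]
    rw [h1] at this
    refine this.congr' ?_
    filter_upwards [self_mem_nhdsWithin] with z hz
    simp only [slope_def_field, hψ0]
    simp only [sub_zero]
  have hψpos : ∀ᶠ s in nhdsWithin 0 (Ioi 0), 0 < ψ s := by
    have := hslope.eventually (eventually_gt_nhds hc)
    filter_upwards [this, self_mem_nhdsWithin] with s hs hs'
    have hspos : (0:ℝ) < s := hs'
    rcases div_pos_iff.1 hs with ⟨h, _⟩ | ⟨_, h⟩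
    · exact h
    · linarith
  -- get ε with all properties on [0, ε]
  obtain ⟨δ₁, hδ₁pos, hδ₁⟩ := Metric.eventually_nhds_iff.1 hd
  obtain ⟨δ₂, hδ₂pos, hδ₂⟩ := Metric.eventually_nhds_iff.1 hmax
  have hψpos' : ∀ᶠ s in nhds (0:ℝ), s ∈ Ioi (0:ℝ) → 0 < ψ s := eventually_nhdsWithin_iff.1 hψpos
  obtain ⟨δ₃, hδ₃pos, hδ₃⟩ := Metric.eventually_nhds_iff.1 hψpos'
  set ε := min δ₁ (min δ₂ δ₃) / 2 with hε
  have hεpos : 0 < ε := by positivity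
  have hεδ₁ : ε < δ₁ := by
    have : min δ₁ (min δ₂ δ₃) ≤ δ₁ := min_le_left _ _
    linarith
  have hεδ₂ : ε < δ₂ := by
    have h1 : min δ₁ (min δ₂ δ₃) ≤ δ₂ := le_trans (min_le_right _ _) (min_le_left _ _)
    linarith
  have hεδ₃ : ε < δ₃ := by
    have h1 : min δ₁ (min δ₂ δ₃) ≤ δ₃ := le_trans (min_le_right _ _) (min_le_right _ _)
    linarith
  -- φ is strictly monotone on [0, ε]
  have hmono : StrictMonoOn φ (Icc 0 ε) := by
    apply strictMonoOn_of_deriv_pos (convex_Icc 0 ε)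
    · intro s hs
      have : HasDerivAt φ (ψ s) s := by
        apply hδ₁
        rw [Real.dist_eq, sub_zero]
        rcases hs with ⟨h1, h2⟩
        rw [abs_of_nonneg h1]; linarith
      exact this.differentiableAt.continuousAt.continuousWithinAt
    · intro s hs
      rw [interior_Icc] at hs
      have hds : HasDerivAt φ (ψ s) s := by
        apply hδ₁; rw [Real.dist_eq, sub_zero, abs_of_pos hs.1]; linarith [hs.2]
      rw [hds.deriv]
      apply hδ₃
      · rw [Real.dist_eq, sub_zero, abs_of_pos hs.1]; linarith [hs.2]
      · exact hs.1
  have h1 : φ 0 < φ ε := hmono (left_mem_Icc.2 hεpos.le) (right_mem_Icc.2 hεpos.le) hεpos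
  have h2 : φ ε ≤ φ 0 := by
    apply hδ₂; rw [Real.dist_eq, sub_zero, abs_of_pos hεpos]; linarith
  linarith

/-- At a max over `Icc 0 T` attained at `t₀ > 0`, the derivative (within) is nonneg. -/
lemma leftDerivNonneg {f : ℝ → ℝ} {D t₀ T : ℝ} (ht : 0 < t₀) (ht' : t₀ ≤ T)
    (hf : HasDerivWithinAt f D (Icc 0 T) t₀)
    (hmax : ∀ t ∈ Icc 0 T, f t ≤ f t₀) : 0 ≤ D := by
  have hsub : Icc (0:ℝ) t₀ ⊆ Icc 0 T := Icc_subset_Icc le_rfl ht'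
  have hf' : HasDerivWithinAt f D (Icc 0 t₀) t₀ := hf.mono hsub
  rw [hasDerivWithinAt_iff_tendsto_slope] at hf'
  have hIco : Icc (0:ℝ) t₀ \ {t₀} = Ico 0 t₀ := by
    ext z; constructor
    · rintro ⟨⟨h1, h2⟩, h3⟩
      exact ⟨h1, lt_of_le_of_ne h2 (by simpa using h3)⟩
    · rintro ⟨h1, h2⟩; exact ⟨⟨h1, h2.le⟩, by simp [ne_of_lt h2]⟩
  rw [hIco] at hf'
  have hne : (nhdsWithin t₀ (Ico 0 t₀)).NeBot := by
    rw [← mem_closure_iff_nhdsWithin_neBot, closure_Ico (ne_of_lt ht)]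
    exact ⟨ht.le, le_rfl⟩
  refine ge_of_tendsto hf' ?_
  filter_upwards [self_mem_nhdsWithin] with z hz
  rw [slope_def_field]
  have h1 : f z ≤ f t₀ := hmax z (hsub ⟨hz.1, hz.2.le⟩)
  have h2 : z - t₀ < 0 := by linarith [hz.2]
  rw [div_nonneg_iff]
  right
  constructor <;> linarith


/-- If `A` is a symmetric positive semidefinite bilinear form (given by entries) and `B`
has nonpositive quadratic form, then the "trace" `∑ᵢⱼ Aᵢⱼ Bᵢⱼ` is nonpositive. -/
lemma psd_trace_ineq {n : ℕ} (A B : Fin n → Fin n → ℝ)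
    (hAsym : ∀ i j, A i j = A j i)
    (hA : ∀ ξ : Fin n → ℝ, 0 ≤ ∑ i, ∑ j, A i j * ξ i * ξ j)
    (hB : ∀ ξ : Fin n → ℝ, (∑ i, ∑ j, ξ i * ξ j * B i j) ≤ 0) :
    (∑ i, ∑ j, A i j * B i j) ≤ 0 := by
  set M : Matrix (Fin n) (Fin n) ℝ := Matrix.of A with hM
  have hMpsd : M.PosSemidef := by
    refine Matrix.PosSemidef.of_dotProduct_mulVec_nonneg ?_ ?_
    · ext i j
      simp [Matrix.conjTranspose, hM, hAsym i j]
    · intro x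
      have := hA x
      simp only [star_trivial, dotProduct, Matrix.mulVec, dotProduct]
      calc (0:ℝ) ≤ ∑ i, ∑ j, A i j * x i * x j := hA x
        _ = ∑ i, x i * ∑ j, (Matrix.of A) i j * x j := by
            rw [Finset.sum_congr rfl]
            intro i _
            rw [Finset.mul_sum]
            exact Finset.sum_congr rfl fun j _ => by simp [hM]; ring
  obtain ⟨S, hSS, hSherm⟩ : ∃ S : Matrix (Fin n) (Fin n) ℝ, S * S = M ∧ S.IsHermitian := by
    open scoped MatrixOrder in
    exact ⟨CFC.sqrt M, CFC.sqrt_mul_sqrt_self M hMpsd.nonneg, (CFC.sqrt_nonneg M).isSelfAdjoint⟩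
  have hSsym : ∀ i j, S i j = S j i := by
    intro i j
    have := congrFun (congrFun hSherm j) i
    simpa [Matrix.conjTranspose_apply] using this
  have hAentry : ∀ i j, A i j = ∑ k, S i k * S k j := by
    intro i j
    have := congrFun (congrFun hSS i) j
    simpa [Matrix.mul_apply, hM] using this.symm
  calc (∑ i, ∑ j, A i j * B i j)
      = ∑ i, ∑ j, (∑ k, S i k * S k j) * B i j := by
        refine Finset.sum_congr rfl fun i _ => Finset.sum_congr rfl fun j _ => by
          rw [hAentry]
    _ = ∑ i, ∑ j, ∑ k, (S k i) * (S k j) * B i j := by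
        refine Finset.sum_congr rfl fun i _ => Finset.sum_congr rfl fun j _ => ?_
        rw [Finset.sum_mul]
        refine Finset.sum_congr rfl fun k _ => ?_
        rw [hSsym i k]
    _ = ∑ k, ∑ i, ∑ j, (S k i) * (S k j) * B i j := by
        rw [Finset.sum_congr rfl fun i (_ : i ∈ Finset.univ) => Finset.sum_comm]
        exact Finset.sum_comm
    _ ≤ 0 := by
        apply Finset.sum_nonpos
        intro k _
        exact hB (fun i => S k i)



/-- A `C^1` function on `[0,T] × closure F` vanishing on the boundary of the open set `F`
is Lipschitz on `[0,T] × closure F`. -/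
lemma lipschitz_aux {n m : ℕ} {T : ℝ} (hT : 0 < T) {F : Set (EuclideanSpace ℝ (Fin n))}
    (hFopen : IsOpen F)
    (u ut : ℝ → EuclideanSpace ℝ (Fin n) → EuclideanSpace ℝ (Fin m))
    (ux : ℝ → EuclideanSpace ℝ (Fin n) →
      (EuclideanSpace ℝ (Fin n) →L[ℝ] EuclideanSpace ℝ (Fin m)))
    (hut : ∀ t ∈ Icc (0:ℝ) T, ∀ x ∈ closure F,
      HasDerivWithinAt (fun s => u s x) (ut t x) (Icc (0:ℝ) T) t)
    (hux : ∀ t ∈ Icc (0:ℝ) T, ∀ x ∈ closure F,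
      HasFDerivWithinAt (u t) (ux t x) (closure F) x)
    (hbdry : ∀ t ∈ Icc (0:ℝ) T, ∀ x ∈ frontier F, u t x = 0)
    (Ct Cx : ℝ) (hCt0 : 0 ≤ Ct) (hCx0 : 0 ≤ Cx)
    (hCt : ∀ t ∈ Icc (0:ℝ) T, ∀ x ∈ closure F, ‖ut t x‖ ≤ Ct)
    (hCx : ∀ t ∈ Icc (0:ℝ) T, ∀ x ∈ closure F, ‖ux t x‖ ≤ Cx) :
    ∃ K : NNReal, LipschitzOnWith K (Function.uncurry u) (Icc (0:ℝ) T ×ˢ closure F) := by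
  have hfr : closure F \ F ⊆ frontier F := by
    intro z hz
    rw [frontier, hFopen.interior_eq]
    exact hz
  -- Step A : mean value inequality along segments contained in closure F
  have claimA : ∀ t ∈ Icc (0:ℝ) T, ∀ p ∈ closure F, ∀ q ∈ closure F,
      segment ℝ p q ⊆ closure F → ‖u t p - u t q‖ ≤ Cx * ‖p - q‖ := by
    intro t ht p hp q hq hseg
    exact (convex_segment q p).norm_image_sub_le_of_norm_hasFDerivWithin_le
      (f := u t) (f' := fun z => ux t z)
      (fun z hz => (hux t ht z (by rw [segment_symm] at hz; exact hseg hz)).mono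
        (by rw [segment_symm]; exact hseg))
      (fun z hz => hCx t ht z (by rw [segment_symm] at hz; exact hseg hz))
      (left_mem_segment ℝ q p) (right_mem_segment ℝ q p)
  -- Step B : bound near the boundary
  have claimB : ∀ t ∈ Icc (0:ℝ) T, ∀ p ∈ closure F, ∀ y, y ∉ F →
      ‖u t p‖ ≤ Cx * dist p y := by
    intro t ht p hp y hy
    by_cases hpF : p ∈ F
    · -- travel along the segment from p towards y until we exit F
      set γ : ℝ → EuclideanSpace ℝ (Fin n) := fun s => p + s • (y - p) with hγ
      have hγcont : Continuous γ := by
        apply continuous_const.add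
        exact continuous_id.smul continuous_const
      set Sbad : Set ℝ := {s | s ∈ Icc (0:ℝ) 1 ∧ γ s ∉ F} with hSbad
      have h1bad : (1:ℝ) ∈ Sbad := by
        constructor
        · exact ⟨zero_le_one, le_rfl⟩
        · simpa [hγ] using hy
      have hSclosed : IsClosed Sbad := by
        have : Sbad = Icc (0:ℝ) 1 ∩ γ ⁻¹' Fᶜ := by
          ext s
          simp only [hSbad, mem_setOf_eq, mem_inter_iff, mem_preimage, mem_compl_iff]
        rw [this]
        exact isClosed_Icc.inter (hFopen.isClosed_compl.preimage hγcont)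
      have hSbdd : BddBelow Sbad := ⟨0, fun s hs => hs.1.1⟩
      have hSne : Sbad.Nonempty := ⟨1, h1bad⟩
      set s₀ := sInf Sbad with hs₀
      have hs₀mem : s₀ ∈ Sbad := hSclosed.csInf_mem hSne hSbdd
      have hs₀nonneg : 0 ≤ s₀ := le_csInf hSne fun s hs => hs.1.1
      have hs₀le1 : s₀ ≤ 1 := csInf_le hSbdd h1bad
      have hs₀pos : 0 < s₀ := by
        rcases eq_or_lt_of_le hs₀nonneg with h | h
        · exfalso
          apply hs₀mem.2
          rw [← h]
          simpa [hγ] using hpF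
        · exact h
      have hforall : ∀ s, 0 ≤ s → s < s₀ → γ s ∈ F := by
        intro s h0 h1
        by_contra hbad
        have : s ∈ Sbad := ⟨⟨h0, h1.le.trans hs₀le1⟩, hbad⟩
        exact absurd (csInf_le hSbdd this) (not_le.2 h1)
      set b := γ s₀ with hb
      have hbcl : b ∈ closure F := by
        have hneb : (nhdsWithin s₀ (Ico 0 s₀)).NeBot := by
          rw [← mem_closure_iff_nhdsWithin_neBot, closure_Ico (ne_of_lt hs₀pos)]
          exact ⟨hs₀pos.le, le_rfl⟩
        have htend : Filter.Tendsto γ (nhdsWithin s₀ (Ico 0 s₀)) (nhds b) :=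
          (hγcont.tendsto s₀).mono_left nhdsWithin_le_nhds
        apply mem_closure_of_tendsto htend
        filter_upwards [self_mem_nhdsWithin] with s hs
        exact hforall s hs.1 hs.2
      have hbF : b ∉ F := hs₀mem.2
      have hub : u t b = 0 := hbdry t ht b (hfr ⟨hbcl, hbF⟩)
      have hsegsub : segment ℝ p b ⊆ closure F := by
        intro z hz
        rw [segment_eq_image] at hz
        obtain ⟨θ, hθ, hzeq⟩ := hz
        have hzγ : z = γ (θ * s₀) := by
          rw [← hzeq, hγ, hb]
          simp only [hγ]
          module
        rw [hzγ]
        rcases lt_or_eq_of_le (by nlinarith [hθ.1, hθ.2, hs₀pos] : θ * s₀ ≤ s₀) with h | h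
        · exact subset_closure (hforall _ (mul_nonneg hθ.1 hs₀nonneg) h)
        · rw [h]
          exact hbcl
      have hnorm : ‖p - b‖ = s₀ * ‖y - p‖ := by
        rw [hb]
        simp only [hγ]
        rw [show p - (p + s₀ • (y - p)) = (-s₀) • (y - p) by module]
        rw [norm_smul]
        simp [abs_of_nonneg hs₀nonneg]
      calc ‖u t p‖ = ‖u t p - u t b‖ := by rw [hub, sub_zero]
        _ ≤ Cx * ‖p - b‖ := claimA t ht p hp b hbcl hsegsub
        _ = Cx * (s₀ * ‖y - p‖) := by rw [hnorm]
        _ ≤ Cx * ‖y - p‖ := by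
            nlinarith [norm_nonneg (y - p), hs₀le1, hs₀nonneg, hCx0,
              mul_le_of_le_one_left (norm_nonneg (y - p)) hs₀le1]
        _ = Cx * dist p y := by rw [dist_eq_norm, norm_sub_rev]
    · -- p itself is on the boundary
      have : u t p = 0 := hbdry t ht p (hfr ⟨hp, hpF⟩)
      rw [this]
      simp only [norm_zero]
      positivity
  -- Step C : spatial Lipschitz bound
  have claimC : ∀ t ∈ Icc (0:ℝ) T, ∀ p ∈ closure F, ∀ q ∈ closure F,
      ‖u t p - u t q‖ ≤ 5 * Cx * ‖p - q‖ := by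
    intro t ht p hp q hq
    by_cases hpq : p = q
    · simp [hpq]
    · set d := ‖p - q‖ with hd
      have hdpos : 0 < d := by
        rw [hd, norm_pos_iff, sub_ne_zero]
        exact hpq
      by_cases hnear : ∃ y, y ∉ F ∧ dist p y ≤ 2 * d
      · obtain ⟨y, hyF, hyd⟩ := hnear
        have h1 : ‖u t p‖ ≤ Cx * (2 * d) :=
          (claimB t ht p hp y hyF).trans (by nlinarith)
        have h2 : ‖u t q‖ ≤ Cx * (3 * d) := by
          refine (claimB t ht q hq y hyF).trans ?_
          have : dist q y ≤ dist q p + dist p y := dist_triangle q p y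
          have hqp : dist q p = d := by rw [dist_eq_norm, ← norm_neg (q - p)]; congr 1; module
          nlinarith
        calc ‖u t p - u t q‖ ≤ ‖u t p‖ + ‖u t q‖ := norm_sub_le _ _
          _ ≤ Cx * (2 * d) + Cx * (3 * d) := add_le_add h1 h2
          _ = 5 * Cx * d := by ring
      · push_neg at hnear
        have hseg : segment ℝ p q ⊆ closure F := by
          intro z hz
          apply subset_closure
          by_contra hzF
          have h2 := hnear z hzF
          have hdz : dist p z ≤ d := by
            rw [segment_eq_image] at hz
            obtain ⟨θ, hθ, hzeq⟩ := hz
            have hpz : p - z = θ • (p - q) := by rw [← hzeq]; module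
            rw [dist_eq_norm, hpz, norm_smul]
            simp only [Real.norm_eq_abs, abs_of_nonneg hθ.1]
            have : θ * ‖p - q‖ ≤ 1 * ‖p - q‖ := by
              apply mul_le_mul_of_nonneg_right hθ.2 (norm_nonneg _)
            rw [hd]; linarith
          linarith
        have := claimA t ht p hp q hq hseg
        nlinarith
  -- Step D : time Lipschitz bound
  have claimD : ∀ x ∈ closure F, ∀ t ∈ Icc (0:ℝ) T, ∀ s ∈ Icc (0:ℝ) T,
      ‖u t x - u s x‖ ≤ Ct * ‖t - s‖ := by
    intro x hx t ht s hs
    exact (convex_Icc (0:ℝ) T).norm_image_sub_le_of_norm_hasDerivWithin_le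
      (f := fun r => u r x) (f' := fun r => ut r x)
      (fun r hr => hut r hr x hx) (fun r hr => hCt r hr x hx) hs ht
  -- Combine
  refine ⟨(Ct + 5 * Cx).toNNReal, ?_⟩
  rw [lipschitzOnWith_iff_dist_le_mul]
  rintro ⟨t, p⟩ ⟨ht, hp⟩ ⟨s, q⟩ ⟨hs, hq⟩
  have hK : ((Ct + 5 * Cx).toNNReal : ℝ) = Ct + 5 * Cx := by
    rw [Real.coe_toNNReal]
    positivity
  rw [hK]
  have hdd : dist ((t, p) : ℝ × EuclideanSpace ℝ (Fin n)) (s, q) =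
      max (dist t s) (dist p q) := rfl
  have h1 : dist t s ≤ dist ((t, p) : ℝ × EuclideanSpace ℝ (Fin n)) (s, q) := by
    rw [hdd]; exact le_max_left _ _
  have h2 : dist p q ≤ dist ((t, p) : ℝ × EuclideanSpace ℝ (Fin n)) (s, q) := by
    rw [hdd]; exact le_max_right _ _
  calc dist (Function.uncurry u (t, p)) (Function.uncurry u (s, q))
      ≤ dist (u t p) (u s p) + dist (u s p) (u s q) := dist_triangle _ _ _
    _ = ‖u t p - u s p‖ + ‖u s p - u s q‖ := by rw [dist_eq_norm, dist_eq_norm]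
    _ ≤ Ct * ‖t - s‖ + 5 * Cx * ‖p - q‖ :=
        add_le_add (claimD p hp t ht s hs) (claimC s hs p hp q hq)
    _ = Ct * dist t s + 5 * Cx * dist p q := by rw [dist_eq_norm, dist_eq_norm]
    _ ≤ Ct * dist ((t, p) : ℝ × EuclideanSpace ℝ (Fin n)) (s, q) +
        5 * Cx * dist ((t, p) : ℝ × EuclideanSpace ℝ (Fin n)) (s, q) := by
        have hd0 : 0 ≤ dist ((t, p) : ℝ × EuclideanSpace ℝ (Fin n)) (s, q) := dist_nonneg
        nlinarith [h1, h2, hCt0, hCx0]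
    _ = (Ct + 5 * Cx) * dist ((t, p) : ℝ × EuclideanSpace ℝ (Fin n)) (s, q) := by ring


end AuxiliaryLemmas

set_option maxHeartbeats 1600000 in
/-- Theorem 2.3 of the paper: maximum principle for the nonlocal
initial–boundary value problem (P)+(IB).  Under assumptions (A1)–(A4), any
`C^{1,2}(F̄_T)` solution `u` of the nonlocal quasilinear parabolic system (P) with
initial–boundary condition (IB) satisfies
`sup_{F̄_T} |u| ≤ e^{λT} max{ sup_{F̄} |φ₀|, √c₁ }` where `λ = c₂ + c₃ L_E² + 1`. -/
theorem stmt_2 (n m : ℕ) (T : ℝ) (hT : 0 < T)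
    (F : Set (EuclideanSpace ℝ (Fin n))) (hFopen : IsOpen F)
    (hFbdd : Bornology.IsBounded F) (hFne : F.Nonempty)
    (E : Type*) [NormedAddCommGroup E] [NormedSpace ℝ E]
    -- the coefficients of system (P)
    (aij : Fin n → Fin n → ℝ → EuclideanSpace ℝ (Fin n) → EuclideanSpace ℝ (Fin m) → ℝ)
    (ai : Fin n → ℝ → EuclideanSpace ℝ (Fin n) → EuclideanSpace ℝ (Fin m) →
      (EuclideanSpace ℝ (Fin n) →L[ℝ] EuclideanSpace ℝ (Fin m)) → E → ℝ)
    (a : ℝ → EuclideanSpace ℝ (Fin n) → EuclideanSpace ℝ (Fin m) →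
      (EuclideanSpace ℝ (Fin n) →L[ℝ] EuclideanSpace ℝ (Fin m)) → E →
      EuclideanSpace ℝ (Fin m))
    (hsymm : ∀ i j t x v, aij i j t x v = aij j i t x v)
    -- the nonlocal assignment u ↦ ϑ_u
    (ϑ : (ℝ → EuclideanSpace ℝ (Fin n) → EuclideanSpace ℝ (Fin m)) →
      ℝ → EuclideanSpace ℝ (Fin n) → E)
    (φ₀ : EuclideanSpace ℝ (Fin n) → EuclideanSpace ℝ (Fin m))
    -- (A1): uniform parabolicity
    (μ μhat : ℝ → ℝ)
    (hμcont : Continuous μ) (hμhatcont : Continuous μhat)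
    (hμpos : ∀ s : ℝ, 0 ≤ s → 0 < μ s) (hμhatpos : ∀ s : ℝ, 0 ≤ s → 0 < μhat s)
    (hμmono : ∀ s r : ℝ, 0 ≤ s → s ≤ r → μ s ≤ μ r)
    (hμhatmono : ∀ s r : ℝ, 0 ≤ s → s ≤ r → μhat r ≤ μhat s)
    (hA1 : ∀ t ∈ Icc (0:ℝ) T, ∀ x ∈ closure F, ∀ v : EuclideanSpace ℝ (Fin m),
      ∀ ξ : EuclideanSpace ℝ (Fin n),
      μhat ‖v‖ * ‖ξ‖ ^ 2 ≤ ∑ i, ∑ j, aij i j t x v * ξ i * ξ j ∧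
      ∑ i, ∑ j, aij i j t x v * ξ i * ξ j ≤ μ ‖v‖ * ‖ξ‖ ^ 2)
    -- (A2): the bound on ϑ, for every Lipschitz v vanishing on ∂F
    (L_E : ℝ) (hL_E : 0 ≤ L_E)
    (hA2 : ∀ v : ℝ → EuclideanSpace ℝ (Fin n) → EuclideanSpace ℝ (Fin m),
      (∃ K : NNReal, LipschitzOnWith K (Function.uncurry v) (Icc (0:ℝ) T ×ˢ closure F)) →
      (∀ t ∈ Icc (0:ℝ) T, ∀ x ∈ frontier F, v t x = 0) →
      ∀ lam : ℝ, 0 ≤ lam → ∀ t ∈ Icc (0:ℝ) T, ∀ x ∈ closure F,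
        Real.exp (-lam * t) * ‖ϑ v t x‖ ≤
          L_E * sSup ((fun p : ℝ × EuclideanSpace ℝ (Fin n) =>
            Real.exp (-lam * p.1) * ‖v p.1 p.2‖) '' (Icc (0:ℝ) T ×ˢ closure F)))
    -- (A3)
    (c₁ c₂ c₃ : ℝ) (hc₁ : 0 ≤ c₁) (hc₂ : 0 ≤ c₂) (hc₃ : 0 ≤ c₃)
    (ζ : ℝ → EuclideanSpace ℝ (Fin n) → EuclideanSpace ℝ (Fin m) →
      (EuclideanSpace ℝ (Fin n) →L[ℝ] EuclideanSpace ℝ (Fin m)) → E →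
      EuclideanSpace ℝ (Fin n) → ℝ)
    (hζnonneg : ∀ t x v p w q, 0 ≤ ζ t x v p w q)
    (hζzero : ∀ t x v p w, ζ t x v p w 0 = 0)
    (hA3 : ∀ t ∈ Icc (0:ℝ) T, ∀ x ∈ closure F,
      ∀ (v : EuclideanSpace ℝ (Fin m))
        (p : EuclideanSpace ℝ (Fin n) →L[ℝ] EuclideanSpace ℝ (Fin m)) (w : E),
      ⟪a t x v p w, v⟫ ≥
        -c₁ - c₂ * ‖v‖ ^ 2 - c₃ * ‖w‖ ^ 2 -
          ζ t x v p w (ContinuousLinearMap.adjoint p v))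
    -- (A4): φ₀ ∈ C^{2+β}(F̄)
    (β : ℝ) (hβ : β ∈ Ioo (0:ℝ) 1)
    (Dφ₀ : EuclideanSpace ℝ (Fin n) →
      (EuclideanSpace ℝ (Fin n) →L[ℝ] EuclideanSpace ℝ (Fin m)))
    (D2φ₀ : EuclideanSpace ℝ (Fin n) →
      (EuclideanSpace ℝ (Fin n) →L[ℝ]
        EuclideanSpace ℝ (Fin n) →L[ℝ] EuclideanSpace ℝ (Fin m)))
    (hφ₀d1 : ∀ x ∈ closure F, HasFDerivWithinAt φ₀ (Dφ₀ x) (closure F) x)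
    (hφ₀d2 : ∀ x ∈ closure F, HasFDerivWithinAt Dφ₀ (D2φ₀ x) (closure F) x)
    (hφ₀c : ContinuousOn φ₀ (closure F))
    (hφ₀c1 : ContinuousOn Dφ₀ (closure F))
    (hφ₀c2 : ContinuousOn D2φ₀ (closure F))
    (hφ₀Hol : ∃ C : ℝ, 0 ≤ C ∧ ∀ x ∈ closure F, ∀ y ∈ closure F,
      dist x y < 1 → ‖D2φ₀ x - D2φ₀ y‖ ≤ C * dist x y ^ β)
    -- the C^{1,2}(F̄_T) solution u, with its derivatives ut, ux, uxx
    (u ut : ℝ → EuclideanSpace ℝ (Fin n) → EuclideanSpace ℝ (Fin m))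
    (ux : ℝ → EuclideanSpace ℝ (Fin n) →
      (EuclideanSpace ℝ (Fin n) →L[ℝ] EuclideanSpace ℝ (Fin m)))
    (uxx : ℝ → EuclideanSpace ℝ (Fin n) →
      (EuclideanSpace ℝ (Fin n) →L[ℝ]
        EuclideanSpace ℝ (Fin n) →L[ℝ] EuclideanSpace ℝ (Fin m)))
    (hut : ∀ t ∈ Icc (0:ℝ) T, ∀ x ∈ closure F,
      HasDerivWithinAt (fun s => u s x) (ut t x) (Icc (0:ℝ) T) t)
    (hux : ∀ t ∈ Icc (0:ℝ) T, ∀ x ∈ closure F,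
      HasFDerivWithinAt (u t) (ux t x) (closure F) x)
    (huxx : ∀ t ∈ Icc (0:ℝ) T, ∀ x ∈ closure F,
      HasFDerivWithinAt (ux t) (uxx t x) (closure F) x)
    (hucont : ContinuousOn (Function.uncurry u) (Icc (0:ℝ) T ×ˢ closure F))
    (hutcont : ContinuousOn (Function.uncurry ut) (Icc (0:ℝ) T ×ˢ closure F))
    (huxcont : ContinuousOn (Function.uncurry ux) (Icc (0:ℝ) T ×ˢ closure F))
    (huxxcont : ContinuousOn (Function.uncurry uxx) (Icc (0:ℝ) T ×ˢ closure F))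
    -- u solves (P) pointwise on F̄_T
    (hPDE : ∀ t ∈ Icc (0:ℝ) T, ∀ x ∈ closure F,
      -(∑ i, ∑ j, aij i j t x (u t x) •
          uxx t x (EuclideanSpace.single i (1:ℝ)) (EuclideanSpace.single j (1:ℝ))) +
        (∑ i, ai i t x (u t x) (ux t x) (ϑ u t x) •
          ux t x (EuclideanSpace.single i (1:ℝ))) +
        a t x (u t x) (ux t x) (ϑ u t x) + ut t x = 0)
    -- (IB)
    (hinit : ∀ x ∈ closure F, u 0 x = φ₀ x)
    (hbdry : ∀ t ∈ Icc (0:ℝ) T, ∀ x ∈ frontier F, u t x = 0) :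
    ∀ t ∈ Icc (0:ℝ) T, ∀ x ∈ closure F,
      ‖u t x‖ ≤ Real.exp ((c₂ + c₃ * L_E ^ 2 + 1) * T) *
        max (sSup ((fun y => ‖φ₀ y‖) '' closure F)) (Real.sqrt c₁) := by

  -- ### Setup
  classical
  set lam : ℝ := c₂ + c₃ * L_E ^ 2 + 1 with hlamdef
  have hlam1 : 1 ≤ lam := by have : 0 ≤ c₃ * L_E ^ 2 := by positivity
                             simp only [hlamdef]; linarith
  have hlam0 : 0 ≤ lam := by linarith
  set S : Set (ℝ × EuclideanSpace ℝ (Fin n)) := Icc (0:ℝ) T ×ˢ closure F with hSdef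
  have hclF : IsCompact (closure F) := hFbdd.isCompact_closure
  have hScomp : IsCompact S := isCompact_Icc.prod hclF
  obtain ⟨z₀, hz₀⟩ := hFne
  have hSne : S.Nonempty := ⟨(0, z₀), ⟨⟨le_rfl, hT.le⟩, subset_closure hz₀⟩⟩
  set h : ℝ × EuclideanSpace ℝ (Fin n) → ℝ :=
    fun p => Real.exp (-lam * p.1) * ‖u p.1 p.2‖ with hhdef
  have hhcont : ContinuousOn h S := by
    apply ContinuousOn.mul
    · exact (Real.continuous_exp.comp (continuous_const.mul continuous_fst)).continuousOn
    · exact hucont.norm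
  have happ : ∀ (t : ℝ) (x : EuclideanSpace ℝ (Fin n)),
      h (t, x) = Real.exp (-lam * t) * ‖u t x‖ := fun t x => rfl
  obtain ⟨⟨t₀, x₀⟩, hp₀S, hp₀max⟩ := hScomp.exists_isMaxOn hSne hhcont
  have ht₀S : t₀ ∈ Icc (0:ℝ) T := hp₀S.1
  have hx₀cl : x₀ ∈ closure F := hp₀S.2
  set M : ℝ := h (t₀, x₀) with hMdef
  have hM : ∀ p ∈ S, h p ≤ M := fun p hp => hp₀max hp
  have hM0 : 0 ≤ M := by
    rw [hMdef, happ]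
    positivity
  have hsSup : sSup (h '' S) = M := by
    apply IsGreatest.csSup_eq
    exact ⟨mem_image_of_mem _ hp₀S, by rintro _ ⟨q, hq, rfl⟩; exact hM q hq⟩
  set Φ : ℝ := sSup ((fun y => ‖φ₀ y‖) '' closure F) with hΦdef
  have hΦbdd : BddAbove ((fun y => ‖φ₀ y‖) '' closure F) :=
    (hclF.image_of_continuousOn hφ₀c.norm).bddAbove
  have hΦ : ∀ x ∈ closure F, ‖φ₀ x‖ ≤ Φ := fun x hx =>
    le_csSup hΦbdd (mem_image_of_mem _ hx)
  set K : ℝ := max Φ (Real.sqrt c₁) with hKdef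
  have hK0 : 0 ≤ K := le_trans (Real.sqrt_nonneg c₁) (le_max_right _ _)
  -- ### Main claim: M ≤ K
  have hMK : M ≤ K := by
    by_contra hlt
    push_neg at hlt
    have hMpos : 0 < M := lt_of_le_of_lt hK0 hlt
    -- t₀ cannot be 0
    have ht₀pos : 0 < t₀ := by
      rcases eq_or_lt_of_le ht₀S.1 with h0 | h0
      · exfalso
        have hM0' : M = ‖φ₀ x₀‖ := by
          rw [hMdef, ← h0, happ, hinit x₀ hx₀cl]
          simp
        have hcon : M ≤ Φ := hM0' ▸ hΦ x₀ hx₀cl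
        have : M ≤ K := hcon.trans (le_max_left _ _)
        linarith
      · exact h0
    -- x₀ must be in F
    have hx₀F : x₀ ∈ F := by
      by_contra hxF
      have hxfr : x₀ ∈ frontier F := by
        rw [frontier, hFopen.interior_eq]; exact ⟨hx₀cl, hxF⟩
      have : M = 0 := by
        rw [hMdef, happ]
        simp [hbdry t₀ ht₀S x₀ hxfr]
      linarith
    -- abbreviations at the maximum point
    set U : EuclideanSpace ℝ (Fin m) := u t₀ x₀ with hUdef
    set P := ux t₀ x₀ with hPdef
    set Q := uxx t₀ x₀ with hQdef
    set w : E := ϑ u t₀ x₀ with hwdef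
    set e : Fin n → EuclideanSpace ℝ (Fin n) := fun i => EuclideanSpace.single i (1:ℝ)
      with hedef
    have hMeq : M = Real.exp (-lam * t₀) * ‖U‖ := by rw [hMdef, happ]
    have hUnorm : ‖U‖ = Real.exp (lam * t₀) * M := by
      rw [hMeq, ← mul_assoc, ← Real.exp_add,
        show lam * t₀ + -lam * t₀ = 0 by ring, Real.exp_zero, one_mul]
    have hle : ∀ x ∈ closure F, ‖u t₀ x‖ ≤ ‖U‖ := by
      intro x hx
      have h1 : h (t₀, x) ≤ M := hM _ ⟨ht₀S, hx⟩
      rw [hMeq, happ] at h1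
      exact le_of_mul_le_mul_left h1 (Real.exp_pos _)
    -- upgrade differentiability at interior points
    have hclnhds : ∀ z ∈ F, closure F ∈ nhds z := fun z hz =>
      Filter.mem_of_superset (hFopen.mem_nhds hz) subset_closure
    have huxat : ∀ z ∈ F, HasFDerivAt (u t₀) (ux t₀ z) z := fun z hz =>
      (hux t₀ ht₀S z (subset_closure hz)).hasFDerivAt (hclnhds z hz)
    have huxxat : HasFDerivAt (ux t₀) Q x₀ :=
      (huxx t₀ ht₀S x₀ hx₀cl).hasFDerivAt (hclnhds x₀ hx₀F)
    -- ### First-order condition: ⟪P ξ, U⟫ = 0 for all ξ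
    have hPzero : ∀ ξ : EuclideanSpace ℝ (Fin n), ⟪P ξ, U⟫ = 0 := by
      have hglocmax : IsLocalMax (fun x => (⟪u t₀ x, u t₀ x⟫ : ℝ)) x₀ := by
        filter_upwards [hFopen.mem_nhds hx₀F] with z hz
        have h1 := hle z (subset_closure hz)
        simp only [real_inner_self_eq_norm_sq]
        exact pow_le_pow_left₀ (norm_nonneg _) h1 2
      have hgd : HasFDerivAt (fun x => (⟪u t₀ x, u t₀ x⟫ : ℝ))
          ((fderivInnerCLM ℝ (u t₀ x₀, u t₀ x₀)).comp <| P.prod P) x₀ :=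
        (huxat x₀ hx₀F).inner ℝ (huxat x₀ hx₀F)
      have hD0 := hglocmax.hasFDerivAt_eq_zero hgd
      intro ξ
      have h2 := congrArg (fun L => L ξ) hD0
      simp only [ContinuousLinearMap.comp_apply, ContinuousLinearMap.prod_apply,
        fderivInnerCLM_apply, ContinuousLinearMap.zero_apply] at h2
      have h3 : (⟪U, P ξ⟫ : ℝ) = ⟪P ξ, U⟫ := real_inner_comm (P ξ) U
      rw [h3] at h2
      linarith [h2.le, h2.ge]
    -- ### Second-order condition (directional)
    have hsecond : ∀ ξ : EuclideanSpace ℝ (Fin n), ⟪Q ξ ξ, U⟫ + ⟪P ξ, P ξ⟫ ≤ 0 := by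
      intro ξ
      set γ : ℝ → EuclideanSpace ℝ (Fin n) := fun s => x₀ + s • ξ with hγdef
      have hγ0 : γ 0 = x₀ := by simp [hγdef]
      have hline : ∀ s : ℝ, HasDerivAt γ ξ s := by
        intro s
        have h1 : HasDerivAt (fun r : ℝ => r • ξ) ((1:ℝ) • ξ) s :=
          (hasDerivAt_id s).smul_const ξ
        simpa [hγdef] using h1.const_add x₀
      have hγcont : Continuous γ := by
        apply continuous_const.add
        exact continuous_id.smul continuous_const
      have hnhds0 : ∀ᶠ s in nhds (0:ℝ), γ s ∈ F := by
        have hopen : IsOpen {s : ℝ | γ s ∈ F} := hFopen.preimage hγcont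
        have h0mem : (0:ℝ) ∈ {s : ℝ | γ s ∈ F} := by
          simp only [mem_setOf_eq, hγ0]
          exact hx₀F
        exact hopen.mem_nhds h0mem
      -- the function along the line and its first derivative
      set φ : ℝ → ℝ := fun s => (⟪u t₀ (γ s), u t₀ (γ s)⟫ : ℝ) with hφdef
      set ψ : ℝ → ℝ := fun s =>
        (⟪u t₀ (γ s), (ux t₀ (γ s)) ξ⟫ : ℝ) + ⟪(ux t₀ (γ s)) ξ, u t₀ (γ s)⟫ with hψdef
      have hd : ∀ᶠ s in nhds (0:ℝ), HasDerivAt φ (ψ s) s := by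
        filter_upwards [hnhds0] with s hs
        have hu1 : HasDerivAt (fun r => u t₀ (γ r)) ((ux t₀ (γ s)) ξ) s :=
          (huxat (γ s) hs).comp_hasDerivAt s (hline s)
        exact hu1.inner ℝ hu1
      -- second derivative at 0
      have hg1 : HasDerivAt (fun r => u t₀ (γ r)) (P ξ) 0 := by
        have hx' : HasFDerivAt (u t₀) P (γ 0) := by rw [hγ0]; exact huxat x₀ hx₀F
        exact hx'.comp_hasDerivAt 0 (hline 0)
      have hg2 : HasDerivAt (fun r => (ux t₀ (γ r)) ξ) (Q ξ ξ) 0 := by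
        have hc : HasDerivAt (fun r => ux t₀ (γ r)) (Q ξ) 0 := by
          have hxx' : HasFDerivAt (ux t₀) Q (γ 0) := by rw [hγ0]; exact huxxat
          exact hxx'.comp_hasDerivAt 0 (hline 0)
        have := hc.clm_apply (hasDerivAt_const 0 ξ)
        simpa [hγ0] using this
      have hd2 : HasDerivAt ψ
          ((⟪u t₀ (γ 0), Q ξ ξ⟫ + ⟪P ξ, (ux t₀ (γ 0)) ξ⟫) +
            (⟪(ux t₀ (γ 0)) ξ, P ξ⟫ + ⟪Q ξ ξ, u t₀ (γ 0)⟫)) 0 := by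
        exact (hg1.inner ℝ hg2).add (hg2.inner ℝ hg1)
      have hmax : IsLocalMax φ 0 := by
        filter_upwards [hnhds0] with s hs
        simp only [hφdef, real_inner_self_eq_norm_sq, hγ0]
        exact pow_le_pow_left₀ (norm_nonneg _) (hle (γ s) (subset_closure hs)) 2
      have hc := secondDerivTest hmax hd hd2
      rw [hγ0] at hc
      have e1 : (⟪U, Q ξ ξ⟫ : ℝ) = ⟪Q ξ ξ, U⟫ := real_inner_comm _ _
      have e2 : (⟪P ξ, (ux t₀ x₀) ξ⟫ : ℝ) = ⟪P ξ, P ξ⟫ := by rw [hPdef]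
      have e3 : (⟪(ux t₀ x₀) ξ, P ξ⟫ : ℝ) = ⟪P ξ, P ξ⟫ := by rw [hPdef]
      rw [e1, e2, e3] at hc
      linarith
    -- ### trace inequality for the diffusion term
    have hQterm : (∑ i, ∑ j, aij i j t₀ x₀ U * ⟪Q (e i) (e j), U⟫) ≤ 0 := by
      set A : Fin n → Fin n → ℝ := fun i j => aij i j t₀ x₀ U with hAdef
      set B : Fin n → Fin n → ℝ :=
        fun i j => ⟪Q (e i) (e j), U⟫ + ⟪P (e i), P (e j)⟫ with hBdef
      have hAsym : ∀ i j, A i j = A j i := fun i j => hsymm i j t₀ x₀ U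
      have hAquad : ∀ ξ : Fin n → ℝ, 0 ≤ ∑ i, ∑ j, A i j * ξ i * ξ j := by
        intro ξ
        have h1 := (hA1 t₀ ht₀S x₀ hx₀cl U ((WithLp.equiv 2 (Fin n → ℝ)).symm ξ)).1
        have h2 : 0 ≤ μhat ‖U‖ * ‖(WithLp.equiv 2 (Fin n → ℝ)).symm ξ‖ ^ 2 :=
          mul_nonneg (hμhatpos ‖U‖ (norm_nonneg U)).le (sq_nonneg _)
        exact le_trans h2 h1
      -- expansion of quadratic forms over the standard basis
      have hbasis : ∀ ξ : Fin n → ℝ,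
          (WithLp.equiv 2 (Fin n → ℝ)).symm ξ = ∑ i, ξ i • e i := by
        intro ξ
        have hb := (EuclideanSpace.basisFun (Fin n) ℝ).sum_repr
          ((WithLp.equiv 2 (Fin n → ℝ)).symm ξ)
        simp only [EuclideanSpace.basisFun_apply, EuclideanSpace.basisFun_repr,
          WithLp.equiv_symm_apply, PiLp.toLp_apply] at hb
        exact hb.symm
      have hBquad : ∀ ξ : Fin n → ℝ, (∑ i, ∑ j, ξ i * ξ j * B i j) ≤ 0 := by
        intro ξ
        have hs := hsecond ((WithLp.equiv 2 (Fin n → ℝ)).symm ξ)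
        rw [hbasis ξ] at hs
        have hsum1 : ∀ (L : EuclideanSpace ℝ (Fin n) →L[ℝ] EuclideanSpace ℝ (Fin m)),
            L (∑ i, ξ i • e i) = ∑ i, ξ i • L (e i) := by
          intro L
          rw [map_sum L (fun i => ξ i • e i) Finset.univ]
          exact Finset.sum_congr rfl fun i _ => L.map_smul _ _
        have hsum2 : Q (∑ i, ξ i • e i) = ∑ i, ξ i • Q (e i) := by
          rw [map_sum Q (fun i => ξ i • e i) Finset.univ]
          exact Finset.sum_congr rfl fun i _ => Q.map_smul _ _
        have hQexp : (⟪Q (∑ i, ξ i • e i) (∑ i, ξ i • e i), U⟫ : ℝ)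
            = ∑ i, ∑ j, ξ i * ξ j * ⟪Q (e i) (e j), U⟫ := by
          rw [hsum2, ContinuousLinearMap.sum_apply, sum_inner]
          refine Finset.sum_congr rfl fun i _ => ?_
          rw [ContinuousLinearMap.smul_apply, real_inner_smul_left, hsum1 (Q (e i)),
            sum_inner, Finset.mul_sum]
          refine Finset.sum_congr rfl fun j _ => ?_
          rw [real_inner_smul_left]
          ring
        have hPexp : (⟪P (∑ i, ξ i • e i), P (∑ i, ξ i • e i)⟫ : ℝ)
            = ∑ i, ∑ j, ξ i * ξ j * ⟪P (e i), P (e j)⟫ := by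
          rw [hsum1 P, sum_inner]
          refine Finset.sum_congr rfl fun i _ => ?_
          rw [real_inner_smul_left, inner_sum, Finset.mul_sum]
          refine Finset.sum_congr rfl fun j _ => ?_
          rw [real_inner_smul_right]
          ring
        rw [hQexp, hPexp] at hs
        calc (∑ i, ∑ j, ξ i * ξ j * B i j)
            = (∑ i, ∑ j, ξ i * ξ j * ⟪Q (e i) (e j), U⟫)
              + ∑ i, ∑ j, ξ i * ξ j * ⟪P (e i), P (e j)⟫ := by
              rw [← Finset.sum_add_distrib]
              refine Finset.sum_congr rfl fun i _ => ?_
              rw [← Finset.sum_add_distrib]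
              refine Finset.sum_congr rfl fun j _ => by rw [hBdef]; ring
          _ ≤ 0 := hs
      have htrace := psd_trace_ineq A B hAsym hAquad hBquad
      -- positivity of the gradient part
      have hPpos : 0 ≤ ∑ i, ∑ j, A i j * ⟪P (e i), P (e j)⟫ := by
        have hinner : ∀ i j, (⟪P (e i), P (e j)⟫ : ℝ)
            = ∑ k, P (e i) k * P (e j) k := by
          intro i j
          rw [PiLp.inner_apply]
          simp [RCLike.inner_apply, conj_trivial]
          exact Finset.sum_congr rfl fun _ _ => mul_comm _ _
        calc (0:ℝ) ≤ ∑ k, ∑ i, ∑ j, A i j * P (e i) k * P (e j) k := by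
              apply Finset.sum_nonneg
              intro k _
              exact hAquad (fun i => P (e i) k)
          _ = ∑ i, ∑ j, A i j * ⟪P (e i), P (e j)⟫ := by
              rw [Finset.sum_comm]
              refine Finset.sum_congr rfl fun i _ => ?_
              rw [Finset.sum_comm]
              refine Finset.sum_congr rfl fun j _ => ?_
              rw [hinner, Finset.mul_sum]
              refine Finset.sum_congr rfl fun k _ => by ring
      have hsplit : (∑ i, ∑ j, A i j * B i j)
          = (∑ i, ∑ j, A i j * ⟪Q (e i) (e j), U⟫)
            + ∑ i, ∑ j, A i j * ⟪P (e i), P (e j)⟫ := by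
        rw [← Finset.sum_add_distrib]
        refine Finset.sum_congr rfl fun i _ => ?_
        rw [← Finset.sum_add_distrib]
        refine Finset.sum_congr rfl fun j _ => by rw [hBdef]; ring
      have hgoal : (∑ i, ∑ j, A i j * ⟪Q (e i) (e j), U⟫) ≤ 0 := by
        rw [hsplit] at htrace
        linarith
      exact hgoal
    -- ### time derivative condition
    have hut_ineq : lam * ⟪U, U⟫ ≤ ⟪ut t₀ x₀, U⟫ := by
      set f : ℝ → ℝ := fun t => Real.exp (-(2 * lam) * t) * ⟪u t x₀, u t x₀⟫ with hfdef
      have hexp : HasDerivAt (fun t => Real.exp (-(2 * lam) * t))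
          (Real.exp (-(2 * lam) * t₀) * (-(2 * lam))) t₀ := by
        have h1 : HasDerivAt (fun t : ℝ => -(2 * lam) * t) (-(2 * lam)) t₀ := by
          simpa using (hasDerivAt_id t₀).const_mul (-(2 * lam))
        exact h1.exp
      have hinner : HasDerivWithinAt (fun t => (⟪u t x₀, u t x₀⟫ : ℝ))
          (⟪u t₀ x₀, ut t₀ x₀⟫ + ⟪ut t₀ x₀, u t₀ x₀⟫) (Icc (0:ℝ) T) t₀ :=
        (hut t₀ ht₀S x₀ hx₀cl).inner ℝ (hut t₀ ht₀S x₀ hx₀cl)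
      have hfd : HasDerivWithinAt f
          (Real.exp (-(2 * lam) * t₀) * (-(2 * lam)) * ⟪u t₀ x₀, u t₀ x₀⟫
            + Real.exp (-(2 * lam) * t₀) * (⟪u t₀ x₀, ut t₀ x₀⟫ + ⟪ut t₀ x₀, u t₀ x₀⟫))
          (Icc (0:ℝ) T) t₀ :=
        hexp.hasDerivWithinAt.mul hinner
      have hkey : ∀ t : ℝ, f t = (Real.exp (-lam * t) * ‖u t x₀‖) ^ 2 := by
        intro t
        rw [hfdef]
        simp only
        rw [real_inner_self_eq_norm_sq, mul_pow, pow_two (Real.exp (-lam * t)),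
          ← Real.exp_add, show -lam * t + -lam * t = -(2 * lam) * t by ring]
      have hfmax : ∀ t ∈ Icc (0:ℝ) T, f t ≤ f t₀ := by
        intro t htI
        rw [hkey, hkey]
        have h1 : Real.exp (-lam * t) * ‖u t x₀‖ ≤ Real.exp (-lam * t₀) * ‖u t₀ x₀‖ := by
          have := hM (t, x₀) ⟨htI, hx₀cl⟩
          rw [happ] at this
          rw [hMeq] at this
          exact this
        have h2 : (0:ℝ) ≤ Real.exp (-lam * t) * ‖u t x₀‖ := by positivity
        exact pow_le_pow_left₀ h2 h1 2
      have hD := leftDerivNonneg ht₀pos ht₀S.2 hfd hfmax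
      have hEpos : (0:ℝ) < Real.exp (-(2 * lam) * t₀) := Real.exp_pos _
      have hcomm : (⟪u t₀ x₀, ut t₀ x₀⟫ : ℝ) = ⟪ut t₀ x₀, u t₀ x₀⟫ :=
        real_inner_comm (ut t₀ x₀) (u t₀ x₀)
      rw [hcomm] at hD
      have hD' : Real.exp (-(2 * lam) * t₀) * (-(2 * lam)) * ⟪u t₀ x₀, u t₀ x₀⟫
          + Real.exp (-(2 * lam) * t₀) * (⟪ut t₀ x₀, u t₀ x₀⟫ + ⟪ut t₀ x₀, u t₀ x₀⟫)
          = Real.exp (-(2 * lam) * t₀)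
            * (-(2 * lam) * ⟪u t₀ x₀, u t₀ x₀⟫ + 2 * ⟪ut t₀ x₀, u t₀ x₀⟫) := by
        ring
      rw [hD'] at hD
      have hC : 0 ≤ -(2 * lam) * (⟪u t₀ x₀, u t₀ x₀⟫ : ℝ) + 2 * ⟪ut t₀ x₀, u t₀ x₀⟫ :=
        (mul_nonneg_iff_of_pos_left hEpos).mp hD
      have hUU : (⟪U, U⟫ : ℝ) = ⟪u t₀ x₀, u t₀ x₀⟫ := rfl
      have hUut : (⟪ut t₀ x₀, U⟫ : ℝ) = ⟪ut t₀ x₀, u t₀ x₀⟫ := rfl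
      rw [hUU, hUut]
      linarith
    -- ### PDE at the maximum point, paired with U
    have hpde_inner : ⟪ut t₀ x₀, U⟫ =
        (∑ i, ∑ j, aij i j t₀ x₀ U * ⟪Q (e i) (e j), U⟫)
        - (∑ i, ai i t₀ x₀ U P w * ⟪P (e i), U⟫)
        - ⟪a t₀ x₀ U P w, U⟫ := by
      have hpde := hPDE t₀ ht₀S x₀ hx₀cl
      have he : ∀ i : Fin n, EuclideanSpace.single i (1:ℝ) = e i := fun i => rfl
      simp only [he] at hpde
      set SQ := ∑ i, ∑ j, aij i j t₀ x₀ U • Q (e i) (e j) with hSQdef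
      set SP := ∑ i, ai i t₀ x₀ U P w • P (e i) with hSPdef
      have h9 : ut t₀ x₀ - (SQ - SP - a t₀ x₀ U P w)
          = -SQ + SP + a t₀ x₀ U P w + ut t₀ x₀ := by abel
      have h10 : ut t₀ x₀ - (SQ - SP - a t₀ x₀ U P w) = 0 := h9.trans hpde
      have hutEq : ut t₀ x₀ = SQ - SP - a t₀ x₀ U P w := sub_eq_zero.mp h10
      rw [hutEq, inner_sub_left, inner_sub_left, hSQdef, hSPdef]
      congr 1
      congr 1
      · rw [sum_inner]
        refine Finset.sum_congr rfl fun i _ => ?_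
        rw [sum_inner]
        exact Finset.sum_congr rfl fun j _ => real_inner_smul_left _ _ _
      · rw [sum_inner]
        exact Finset.sum_congr rfl fun i _ => real_inner_smul_left _ _ _
    -- ### bound on the nonlocal term via (A2)
    have hwbound : ‖w‖ ≤ L_E * M * Real.exp (lam * t₀) := by
      obtain ⟨Ct', hCt'⟩ := hScomp.exists_bound_of_continuousOn hutcont
      obtain ⟨Cx', hCx'⟩ := hScomp.exists_bound_of_continuousOn huxcont
      have hCtb : ∀ t ∈ Icc (0:ℝ) T, ∀ x ∈ closure F, ‖ut t x‖ ≤ max Ct' 0 :=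
        fun t ht x hx => le_trans (hCt' (t, x) ⟨ht, hx⟩) (le_max_left _ _)
      have hCxb : ∀ t ∈ Icc (0:ℝ) T, ∀ x ∈ closure F, ‖ux t x‖ ≤ max Cx' 0 :=
        fun t ht x hx => le_trans (hCx' (t, x) ⟨ht, hx⟩) (le_max_left _ _)
      have hlip := lipschitz_aux hT hFopen u ut ux hut hux hbdry
        (max Ct' 0) (max Cx' 0) (le_max_right _ _) (le_max_right _ _) hCtb hCxb
      have hA2u := hA2 u hlip hbdry lam hlam0 t₀ ht₀S x₀ hx₀cl
      rw [show (fun p : ℝ × EuclideanSpace ℝ (Fin n) =>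
          Real.exp (-lam * p.1) * ‖u p.1 p.2‖) = h from hhdef.symm] at hA2u
      rw [hsSup] at hA2u
      have hA2u' : Real.exp (-lam * t₀) * ‖w‖ ≤ L_E * M := hA2u
      have hpos : (0:ℝ) < Real.exp (lam * t₀) := Real.exp_pos _
      calc ‖w‖ = Real.exp (lam * t₀) * (Real.exp (-lam * t₀) * ‖w‖) := by
            rw [← mul_assoc, ← Real.exp_add,
              show lam * t₀ + -lam * t₀ = 0 by ring, Real.exp_zero, one_mul]
        _ ≤ Real.exp (lam * t₀) * (L_E * M) :=
            mul_le_mul_of_nonneg_left hA2u' hpos.le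
        _ = L_E * M * Real.exp (lam * t₀) := by ring
    -- ### combine everything
    have hadj : ContinuousLinearMap.adjoint P U = 0 := by
      have hall : ∀ η : EuclideanSpace ℝ (Fin n),
          ⟪ContinuousLinearMap.adjoint P U, η⟫ = 0 := by
        intro η
        rw [ContinuousLinearMap.adjoint_inner_left, real_inner_comm]
        exact hPzero η
      have := hall (ContinuousLinearMap.adjoint P U)
      exact inner_self_eq_zero.mp this
    have hA3' := hA3 t₀ ht₀S x₀ hx₀cl U P w
    rw [hadj, hζzero t₀ x₀ U P w] at hA3'
    have hmid : (∑ i, ai i t₀ x₀ U P w * ⟪P (e i), U⟫) = 0 := by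
      apply Finset.sum_eq_zero
      intro i _
      rw [hPzero (e i), mul_zero]
    have hinnerU : ⟪U, U⟫ = ‖U‖ ^ 2 := real_inner_self_eq_norm_sq U
    have hX1 : 1 ≤ Real.exp (lam * t₀) :=
      Real.one_le_exp (by positivity)
    set X : ℝ := Real.exp (lam * t₀) with hXdef
    have hw2 : c₃ * ‖w‖ ^ 2 ≤ c₃ * L_E ^ 2 * (X ^ 2 * M ^ 2) := by
      have h1 : ‖w‖ ^ 2 ≤ (L_E * M * X) ^ 2 :=
        pow_le_pow_left₀ (norm_nonneg w) hwbound 2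
      calc c₃ * ‖w‖ ^ 2 ≤ c₃ * (L_E * M * X) ^ 2 :=
            mul_le_mul_of_nonneg_left h1 hc₃
        _ = c₃ * L_E ^ 2 * (X ^ 2 * M ^ 2) := by ring
    -- final computation
    have hfinal : X ^ 2 * M ^ 2 ≤ c₁ := by
      have h1 : lam * ‖U‖ ^ 2 ≤ c₁ + c₂ * ‖U‖ ^ 2 + c₃ * ‖w‖ ^ 2 := by
        have h2 := hut_ineq
        rw [hpde_inner, hmid, sub_zero] at h2
        rw [hinnerU] at h2
        linarith [hQterm, hA3']
      rw [hUnorm] at h1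
      have hexp2 : (X * M) ^ 2 = X ^ 2 * M ^ 2 := by ring
      rw [hexp2] at h1
      rw [hlamdef] at h1
      have expand : (c₂ + c₃ * L_E ^ 2 + 1) * (X ^ 2 * M ^ 2)
          = c₂ * (X ^ 2 * M ^ 2) + c₃ * L_E ^ 2 * (X ^ 2 * M ^ 2) + X ^ 2 * M ^ 2 := by
        ring
      rw [expand] at h1
      linarith [h1, hw2]
    have hM2 : M ^ 2 ≤ c₁ := by
      have hXX : 1 ≤ X ^ 2 := one_le_pow₀ hX1
      have h5 : 1 * M ^ 2 ≤ X ^ 2 * M ^ 2 :=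
        mul_le_mul_of_nonneg_right hXX (sq_nonneg M)
      rw [one_mul] at h5
      linarith [hfinal]
    have hMsqrt : M ≤ Real.sqrt c₁ := by
      have h1 : Real.sqrt (M ^ 2) ≤ Real.sqrt c₁ := Real.sqrt_le_sqrt hM2
      rwa [Real.sqrt_sq hM0] at h1
    have : M ≤ K := hMsqrt.trans (le_max_right _ _)
    linarith
  -- ### Conclusion
  intro t ht x hx
  have h1 : h (t, x) ≤ M := hM _ ⟨ht, hx⟩
  have h2 : ‖u t x‖ = Real.exp (lam * t) * h (t, x) := by
    rw [happ, ← mul_assoc, ← Real.exp_add,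
      show lam * t + -lam * t = 0 by ring, Real.exp_zero, one_mul]
  rw [h2]
  have h3 : Real.exp (lam * t) ≤ Real.exp (lam * T) :=
    Real.exp_le_exp.mpr (mul_le_mul_of_nonneg_left ht.2 hlam0)
  have h4 : 0 ≤ h (t, x) := by rw [hhdef]; positivity
  calc Real.exp (lam * t) * h (t, x) ≤ Real.exp (lam * T) * M := by
        apply mul_le_mul h3 (h1.trans (le_refl M)) h4 (Real.exp_pos _).le
    _ ≤ Real.exp (lam * T) * K := by
        apply mul_le_mul_of_nonneg_left hMK (Real.exp_pos _).le
    _ = Real.exp ((c₂ + c₃ * L_E ^ 2 + 1) * T) * max Φ (Real.sqrt c₁) := by rw [hlamdef]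


end
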